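/- Let P be a transition kernel on a pseudometric space (E,d) with the property that for every ε > 0 there exists r > 0 with P(x, B_r(x)) > 1 − ε for all x. Fix x* ∈ E. If P is geometrically ergodic (i.e., satisfies a geometric drift condition with a small set of positive Π-measure, for its invariant probability Π), then there exists δ > 0 such that ∫ exp(δ d(x*, x)) Π(dx) < ∞. -/

import Mathlib

open MeasureTheory ProbabilityTheory
open scoped ENNReal

/-- The `k`-step kernel `P^k`. -/
noncomputable def iterKernel {E : Type*} [MeasurableSpace E] (P : Kernel E E) : ℕ → Kernel E E
  | 0 => Kernel.id
  | n + 1 => P ∘ₖ iterKernel P n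

/-- `C` is a small set for `P`. -/
def IsSmallSet {E : Type*} [MeasurableSpace E] (P : Kernel E E) (C : Set E) : Prop :=
  ∃ (k : ℕ) (δ : ℝ) (ν : Measure E), 1 ≤ k ∧ δ ∈ Set.Ioo (0:ℝ) 1 ∧ IsProbabilityMeasure ν ∧
    ∀ x ∈ C, ∀ A : Set E, MeasurableSet A → ENNReal.ofReal δ * ν A ≤ iterKernel P k x A

/-- Geometric ergodicity (geometric drift condition towards a small set of positive
`Π`-measure). -/
def GeomErgodic {E : Type*} [MeasurableSpace E] (P : Kernel E E) (Pr : Measure E) : Prop :=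
  ∃ (C : Set E) (V : E → ℝ≥0∞) (γ b : ℝ),
    MeasurableSet C ∧ IsSmallSet P C ∧ 0 < Pr C ∧
    γ ∈ Set.Ioo (0:ℝ) 1 ∧ 0 ≤ b ∧ Measurable V ∧ (∀ x, 1 ≤ V x) ∧ Pr {x | V x = ∞} = 0 ∧
    ∀ x, ∫⁻ y, V y ∂(P x) ≤ ENNReal.ofReal γ * V x + ENNReal.ofReal b * C.indicator 1 x

section Aux
variable {E : Type*} [MeasurableSpace E] (P : Kernel E E)

instance iterKernel_markov [IsMarkovKernel P] (n : ℕ) : IsMarkovKernel (iterKernel P n) := by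
  induction n with
  | zero => rw [iterKernel]; infer_instance
  | succ n ih => rw [iterKernel]; infer_instance

/-- The functions `x ↦ (1_{Cᶜ} P)^n 1 (x)`. -/
noncomputable def outFun (C : Set E) : ℕ → E → ℝ≥0∞
  | 0 => fun _ => 1
  | n + 1 => Cᶜ.indicator (fun x => ∫⁻ y, outFun C n y ∂P x)

lemma outFun_measurable [IsMarkovKernel P] {C : Set E} (hC : MeasurableSet C) (n : ℕ) :
    Measurable (outFun P C n) := by
  induction n with
  | zero => exact measurable_const
  | succ n ih =>
      refine Measurable.indicator ?_ hC.compl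
      exact Measurable.lintegral_kernel_prod_right' (κ := P) (ih.comp measurable_snd)

lemma outFun_le_one [IsMarkovKernel P] (C : Set E) (n : ℕ) (x : E) :
    outFun P C n x ≤ 1 := by
  induction n generalizing x with
  | zero => exact le_refl 1
  | succ n ih =>
      rw [outFun]
      refine Set.indicator_le' (fun x _ => ?_) (fun _ _ => zero_le_one) x
      calc ∫⁻ y, outFun P C n y ∂P x ≤ ∫⁻ _, 1 ∂P x := lintegral_mono ih
        _ = 1 := by simp

end Aux

/-- If a `Π`-invariant `Π`-irreducible Markov kernel on a pseudometric space satisfies the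
uniform local-move property and is geometrically ergodic, then `Π` integrates
`exp(δ d(x*, ·))` for some `δ > 0`. -/
theorem exp_moment_of_geomErgodic_local_moves
    {E : Type*} [PseudoMetricSpace E] [MeasurableSpace E] [BorelSpace E]
    (P : Kernel E E) [IsMarkovKernel P] (Pr : Measure E) [IsProbabilityMeasure Pr]
    (hinv : ∀ A : Set E, MeasurableSet A → ∫⁻ x, P x A ∂Pr = Pr A)
    (hirr : ∀ x : E, Pr ≪ Measure.sum (fun k : ℕ => iterKernel P (k + 1) x))
    (hloc : ∀ ε : ℝ, 0 < ε → ∃ r : ℝ, 0 < r ∧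
      ∀ x : E, 1 - ENNReal.ofReal ε < P x (Metric.ball x r))
    (xstar : E)
    (herg : GeomErgodic P Pr) :
    ∃ δ : ℝ, 0 < δ ∧ ∫⁻ x, ENNReal.ofReal (Real.exp (δ * dist xstar x)) ∂Pr < ∞ := by
  obtain ⟨C, V, γ, b, hC, hsmall, hCpos, hγ, hb, hVmeas, hV1, hVfin, hdrift⟩ := herg
  obtain ⟨k, δ0, ν, hk, hδ0, hν, hsm⟩ := hsmall
  -- ## Step 1: the small set C is bounded
  have hk0 : (0:ℝ) < k := by exact_mod_cast Nat.lt_of_lt_of_le Nat.zero_lt_one hk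
  obtain ⟨r, hr, hrP⟩ := hloc (δ0 / (3 * k)) (div_pos hδ0.1 (by positivity))
  -- one-step bound on leaving a ball
  have hstep : ∀ (x : E) (S : Set E), MeasurableSet S → Disjoint S (Metric.ball x r) →
      P x S ≤ ENNReal.ofReal (δ0 / (3 * k)) := by
    intro x S hS hdisj
    have h1 : S ⊆ (Metric.ball x r)ᶜ := Set.subset_compl_iff_disjoint_right.mpr hdisj
    calc P x S ≤ P x (Metric.ball x r)ᶜ := measure_mono h1
      _ = 1 - P x (Metric.ball x r) := prob_compl_eq_one_sub Metric.isOpen_ball.measurableSet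
      _ ≤ 1 - (1 - ENNReal.ofReal (δ0 / (3 * k))) := tsub_le_tsub_left (hrP x).le 1
      _ ≤ ENNReal.ofReal (δ0 / (3 * k)) := tsub_le_iff_right.mpr le_add_tsub
  have hiter : ∀ (n : ℕ) (x : E),
      iterKernel P n x (Metric.closedBall x (n * r))ᶜ ≤ n * ENNReal.ofReal (δ0 / (3 * k)) := by
    intro n
    induction n with
    | zero =>
        intro x
        rw [iterKernel, Kernel.id_apply,
          Measure.dirac_apply' _ measurableSet_closedBall.compl]
        have hx : x ∈ Metric.closedBall x (((0:ℕ):ℝ) * r) := by simp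
        rw [Set.indicator_of_notMem (Set.notMem_compl_iff.mpr hx)]
        simp
    | succ n ih =>
        intro x
        have hmeas : MeasurableSet (Metric.closedBall x ((((n+1):ℕ):ℝ) * r))ᶜ :=
          measurableSet_closedBall.compl
        rw [iterKernel, Kernel.comp_apply' _ _ _ hmeas]
        have hbound : ∀ y : E, P y (Metric.closedBall x ((((n+1):ℕ):ℝ) * r))ᶜ ≤
            ENNReal.ofReal (δ0 / (3 * k)) +
              (Metric.closedBall x ((n:ℝ) * r))ᶜ.indicator 1 y := by
          intro y
          by_cases hy : y ∈ Metric.closedBall x ((n:ℝ) * r)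
          · refine le_add_right (hstep y _ hmeas ?_)
            rw [Set.disjoint_left]
            intro z hz hz'
            rw [Set.mem_compl_iff, Metric.mem_closedBall, not_le] at hz
            rw [Metric.mem_ball] at hz'
            rw [Metric.mem_closedBall] at hy
            have h3 := dist_triangle z y x
            push_cast at hz
            linarith
          · rw [Set.indicator_of_mem (Set.mem_compl hy), Pi.one_apply]
            exact le_add_left prob_le_one
        calc ∫⁻ y, P y (Metric.closedBall x ((((n+1):ℕ):ℝ) * r))ᶜ ∂(iterKernel P n x)
            ≤ ∫⁻ y, (ENNReal.ofReal (δ0 / (3 * k)) +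
              (Metric.closedBall x ((n:ℝ) * r))ᶜ.indicator 1 y) ∂(iterKernel P n x) :=
              lintegral_mono hbound
          _ = ENNReal.ofReal (δ0 / (3 * k)) +
              iterKernel P n x (Metric.closedBall x ((n:ℝ) * r))ᶜ := by
              rw [lintegral_add_left measurable_const, lintegral_const,
                lintegral_indicator measurableSet_closedBall.compl]
              simp
          _ ≤ ENNReal.ofReal (δ0 / (3 * k)) + n * ENNReal.ofReal (δ0 / (3 * k)) :=
              add_le_add_right (ih x) _
          _ = ((n+1 : ℕ) : ℝ≥0∞) * ENNReal.ofReal (δ0 / (3 * k)) := by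
              push_cast
              ring
  have hνball : ∀ x ∈ C, ENNReal.ofReal (2/3) ≤ ν (Metric.closedBall x (k * r)) := by
    intro x hx
    have h1 := hsm x hx (Metric.closedBall x ((k:ℝ) * r))ᶜ measurableSet_closedBall.compl
    have h2 := hiter k x
    have h3 : (k : ℝ≥0∞) * ENNReal.ofReal (δ0 / (3 * k)) = ENNReal.ofReal (δ0 / 3) := by
      rw [← ENNReal.ofReal_natCast k, ← ENNReal.ofReal_mul (by positivity)]
      congr 1
      field_simp
    have h4 : ENNReal.ofReal δ0 * ν (Metric.closedBall x ((k:ℝ) * r))ᶜ ≤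
        ENNReal.ofReal δ0 * ENNReal.ofReal (1/3) := by
      rw [← ENNReal.ofReal_mul hδ0.1.le]
      calc ENNReal.ofReal δ0 * ν (Metric.closedBall x ((k:ℝ) * r))ᶜ
          ≤ iterKernel P k x (Metric.closedBall x ((k:ℝ) * r))ᶜ := h1
        _ ≤ (k : ℝ≥0∞) * ENNReal.ofReal (δ0 / (3 * k)) := h2
        _ = ENNReal.ofReal (δ0 * (1/3)) := by rw [h3]; congr 1; ring
    have h5 : ν (Metric.closedBall x ((k:ℝ) * r))ᶜ ≤ ENNReal.ofReal (1/3) :=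
      (ENNReal.mul_le_mul_iff_right (ENNReal.ofReal_pos.mpr hδ0.1).ne' ENNReal.ofReal_ne_top).mp h4
    have h6 : 1 - ν (Metric.closedBall x ((k:ℝ) * r)) ≤ ENNReal.ofReal (1/3) := by
      rw [← prob_compl_eq_one_sub measurableSet_closedBall]
      exact h5
    calc ENNReal.ofReal (2/3) = 1 - ENNReal.ofReal (1/3) := by
          rw [← ENNReal.ofReal_one, ← ENNReal.ofReal_sub _ (by norm_num)]
          norm_num
      _ ≤ ν (Metric.closedBall x ((k:ℝ) * r)) := by
          rw [tsub_le_iff_right]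
          rw [add_comm]
          exact tsub_le_iff_right.mp h6
  have hCdiam : ∀ x ∈ C, ∀ y ∈ C, dist x y ≤ 2 * (k * r) := by
    intro x hx y hy
    by_contra hcon
    push_neg at hcon
    have hd : Disjoint (Metric.closedBall x ((k:ℝ) * r)) (Metric.closedBall y ((k:ℝ) * r)) := by
      rw [Set.disjoint_left]
      intro z hz hz'
      rw [Metric.mem_closedBall] at hz hz'
      have h1 := dist_triangle x z y
      have h2 := dist_comm x z
      linarith
    have h7 : ENNReal.ofReal (2/3) + ENNReal.ofReal (2/3) ≤ 1 := by
      calc ENNReal.ofReal (2/3) + ENNReal.ofReal (2/3)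
          ≤ ν (Metric.closedBall x ((k:ℝ) * r)) + ν (Metric.closedBall y ((k:ℝ) * r)) :=
            add_le_add (hνball x hx) (hνball y hy)
        _ = ν (Metric.closedBall x ((k:ℝ) * r) ∪ Metric.closedBall y ((k:ℝ) * r)) :=
            (measure_union hd measurableSet_closedBall).symm
        _ ≤ 1 := prob_le_one
    rw [← ENNReal.ofReal_add (by norm_num) (by norm_num)] at h7
    rw [show (2:ℝ)/3 + 2/3 = 4/3 by norm_num] at h7
    have := ENNReal.ofReal_le_one.mp h7
    norm_num at this
  obtain ⟨x0, hx0⟩ : C.Nonempty := by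
    rw [Set.nonempty_iff_ne_empty]; rintro rfl; simp at hCpos
  set R : ℝ := dist xstar x0 + 2 * (k * r) with hR
  have hR0 : 0 ≤ R := add_nonneg dist_nonneg (by positivity)
  have hCsub : C ⊆ Metric.closedBall xstar R := by
    intro y hy
    have := hCdiam x0 hx0 y hy
    have h2 := dist_triangle xstar x0 y
    simp only [Metric.mem_closedBall, dist_comm y xstar]
    linarith
  -- ## Step 2: invariance of Pr for lower integrals
  have hbind : Pr.bind ⇑P = Pr := by
    ext A hA
    rw [Measure.bind_apply hA (Kernel.measurable P).aemeasurable]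
    exact hinv A hA
  have hinvf : ∀ f : E → ℝ≥0∞, Measurable f →
      ∫⁻ x, ∫⁻ y, f y ∂P x ∂Pr = ∫⁻ y, f y ∂Pr := by
    intro f hf
    conv_rhs => rw [← hbind]
    rw [Measure.lintegral_bind (Kernel.measurable P).aemeasurable hf.aemeasurable]
  -- ## Step 3: Pr-integrability of V
  set M : ℝ≥0∞ := ∫⁻ x, V x ∂Pr with hM
  have hMfin : M < ∞ := by
    have hWmeas : ∀ N : ℕ, Measurable (fun x => min (V x) (N:ℝ≥0∞)) :=
      fun N => hVmeas.min measurable_const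
    set c : ℝ≥0∞ := ENNReal.ofReal (1 - γ) with hcdef
    have hc0 : c ≠ 0 := (ENNReal.ofReal_pos.mpr (by linarith [hγ.2])).ne'
    have hctop : c ≠ ∞ := ENNReal.ofReal_ne_top
    have hTmeas : ∀ N : ℕ, Measurable (({x : E | V x ≤ (N:ℝ≥0∞)}).indicator V) :=
      fun N => hVmeas.indicator (hVmeas measurableSet_Iic)
    have key : ∀ N : ℕ,
        c * ∫⁻ x, ({x : E | V x ≤ (N:ℝ≥0∞)}).indicator V x ∂Pr ≤ ENNReal.ofReal b := by
      intro N
      have hpt : ∀ x, (∫⁻ y, min (V y) (N:ℝ≥0∞) ∂P x) +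
          c * ({x : E | V x ≤ (N:ℝ≥0∞)}).indicator V x
          ≤ min (V x) (N:ℝ≥0∞) + ENNReal.ofReal b * C.indicator 1 x := by
        intro x
        have hPW : (∫⁻ y, min (V y) (N:ℝ≥0∞) ∂P x) ≤
            min (ENNReal.ofReal γ * V x + ENNReal.ofReal b * C.indicator 1 x) (N:ℝ≥0∞) := by
          refine le_min (le_trans (lintegral_mono fun y => min_le_left _ _) (hdrift x)) ?_
          calc ∫⁻ y, min (V y) (N:ℝ≥0∞) ∂P x ≤ ∫⁻ _, (N:ℝ≥0∞) ∂P x :=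
                lintegral_mono fun y => min_le_right _ _
            _ = N := by simp
        by_cases hx : V x ≤ (N:ℝ≥0∞)
        · rw [Set.indicator_of_mem (show x ∈ {x : E | V x ≤ (N:ℝ≥0∞)} from hx),
            min_eq_left hx]
          calc (∫⁻ y, min (V y) (N:ℝ≥0∞) ∂P x) + c * V x
              ≤ (ENNReal.ofReal γ * V x + ENNReal.ofReal b * C.indicator 1 x) + c * V x :=
                add_le_add_left (le_trans hPW (min_le_left _ _)) _
            _ = (ENNReal.ofReal γ + c) * V x + ENNReal.ofReal b * C.indicator 1 x := by ring
            _ = V x + ENNReal.ofReal b * C.indicator 1 x := by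
                rw [hcdef, ← ENNReal.ofReal_add hγ.1.le (by linarith [hγ.2])]
                norm_num
        · rw [Set.indicator_of_notMem (show x ∉ {x : E | V x ≤ (N:ℝ≥0∞)} from hx),
            mul_zero, add_zero,
            min_eq_right (le_of_not_ge hx)]
          exact le_add_right (le_trans hPW (min_le_right _ _))
      have hPWmeas : Measurable (fun x => ∫⁻ y, min (V y) (N:ℝ≥0∞) ∂P x) :=
        Measurable.lintegral_kernel_prod_right' (κ := P) ((hWmeas N).comp measurable_snd)
      have hWfin : (∫⁻ x, min (V x) (N:ℝ≥0∞) ∂Pr) ≠ ∞ := by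
        refine ne_top_of_le_ne_top (ENNReal.natCast_ne_top N) ?_
        calc ∫⁻ x, min (V x) (N:ℝ≥0∞) ∂Pr ≤ ∫⁻ _, (N:ℝ≥0∞) ∂Pr :=
              lintegral_mono fun y => min_le_right _ _
          _ = N := by simp
      have hint : (∫⁻ x, min (V x) (N:ℝ≥0∞) ∂Pr) +
          c * ∫⁻ x, ({x : E | V x ≤ (N:ℝ≥0∞)}).indicator V x ∂Pr ≤
          (∫⁻ x, min (V x) (N:ℝ≥0∞) ∂Pr) + ENNReal.ofReal b := by
        calc (∫⁻ x, min (V x) (N:ℝ≥0∞) ∂Pr) +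
            c * ∫⁻ x, ({x : E | V x ≤ (N:ℝ≥0∞)}).indicator V x ∂Pr
            = ∫⁻ x, ((∫⁻ y, min (V y) (N:ℝ≥0∞) ∂P x) +
                c * ({x : E | V x ≤ (N:ℝ≥0∞)}).indicator V x) ∂Pr := by
              rw [lintegral_add_left hPWmeas, lintegral_const_mul c (hTmeas N),
                hinvf _ (hWmeas N)]
          _ ≤ ∫⁻ x, (min (V x) (N:ℝ≥0∞) + ENNReal.ofReal b * C.indicator 1 x) ∂Pr :=
              lintegral_mono hpt
          _ = (∫⁻ x, min (V x) (N:ℝ≥0∞) ∂Pr) + ENNReal.ofReal b * Pr C := by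
              rw [lintegral_add_left (hWmeas N),
                lintegral_const_mul _ (measurable_one.indicator hC),
                lintegral_indicator hC]
              simp
          _ ≤ (∫⁻ x, min (V x) (N:ℝ≥0∞) ∂Pr) + ENNReal.ofReal b := by
              refine add_le_add_right ?_ _
              calc ENNReal.ofReal b * Pr C ≤ ENNReal.ofReal b * 1 :=
                    mul_le_mul_of_nonneg_left prob_le_one (by positivity)
                _ = ENNReal.ofReal b := mul_one _
      exact (ENNReal.add_le_add_iff_left hWfin).mp hint
    have hmono : Monotone (fun (N : ℕ) (x : E) => ({x : E | V x ≤ (N:ℝ≥0∞)}).indicator V x) := by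
      intro i j hij x
      refine Set.indicator_le_indicator_of_subset ?_ (fun _ => zero_le) x
      intro y hy
      simp only [Set.mem_setOf_eq] at hy ⊢
      exact le_trans hy (by exact_mod_cast Nat.cast_le.mpr hij)
    have hsup : M = ⨆ N : ℕ, ∫⁻ x, ({x : E | V x ≤ (N:ℝ≥0∞)}).indicator V x ∂Pr := by
      rw [hM, ← lintegral_iSup hTmeas hmono]
      refine lintegral_congr_ae ?_
      have hae : ∀ᵐ x ∂Pr, V x ≠ ∞ := by
        rw [ae_iff]
        simpa using hVfin
      filter_upwards [hae] with x hx
      obtain ⟨N, hN⟩ := ENNReal.exists_nat_gt hx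
      refine le_antisymm ?_ (iSup_le fun N => Set.indicator_le_self _ _ x)
      refine le_iSup_of_le N ?_
      rw [Set.indicator_of_mem (show x ∈ {x : E | V x ≤ (N:ℝ≥0∞)} from le_of_lt hN)]
    rw [hsup]
    have hbound : ∀ N : ℕ, ∫⁻ x, ({x : E | V x ≤ (N:ℝ≥0∞)}).indicator V x ∂Pr ≤
        c⁻¹ * ENNReal.ofReal b := by
      intro N
      have h9 : ∫⁻ x, ({x : E | V x ≤ (N:ℝ≥0∞)}).indicator V x ∂Pr =
          c⁻¹ * (c * ∫⁻ x, ({x : E | V x ≤ (N:ℝ≥0∞)}).indicator V x ∂Pr) := by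
        rw [← mul_assoc, ENNReal.inv_mul_cancel hc0 hctop, one_mul]
      rw [h9]
      exact mul_le_mul_of_nonneg_left (key N) (by positivity)
    refine lt_of_le_of_lt (iSup_le hbound) ?_
    exact ENNReal.mul_lt_top (lt_top_iff_ne_top.mpr (ENNReal.inv_ne_top.mpr hc0))
      ENNReal.ofReal_lt_top
  -- ## Step 4: drift bound on outFun
  have hgV : ∀ (n : ℕ) (x : E), outFun P C n x ≤ ENNReal.ofReal γ ^ n * V x := by
    intro n
    induction n with
    | zero => intro x; simpa [outFun] using hV1 x
    | succ n ih =>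
        intro x
        rw [outFun]
        by_cases hx : x ∈ C
        · rw [Set.indicator_of_notMem (Set.notMem_compl_iff.mpr hx)]
          exact zero_le
        · rw [Set.indicator_of_mem (Set.mem_compl hx)]
          calc ∫⁻ y, outFun P C n y ∂P x ≤ ∫⁻ y, ENNReal.ofReal γ ^ n * V y ∂P x :=
                lintegral_mono fun y => ih y
            _ = ENNReal.ofReal γ ^ n * ∫⁻ y, V y ∂P x := lintegral_const_mul _ hVmeas
            _ ≤ ENNReal.ofReal γ ^ n *
                (ENNReal.ofReal γ * V x + ENNReal.ofReal b * C.indicator 1 x) :=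
                mul_le_mul_of_nonneg_left (hdrift x) (by positivity)
            _ = ENNReal.ofReal γ ^ (n+1) * V x := by
                rw [Set.indicator_of_notMem hx, mul_zero, add_zero, ← mul_assoc, ← pow_succ]
  -- ## Step 5: lower bound on outFun far away
  obtain ⟨r', hr', hrP'⟩ := hloc ((1 - γ) / 2) (by linarith [hγ.2])
  set η : ℝ := (1 + γ) / 2 with hη
  have hηγ : γ < η := by rw [hη]; linarith [hγ.2]
  have hη1 : η < 1 := by rw [hη]; linarith [hγ.2]
  have hη0 : 0 < η := by rw [hη]; linarith [hγ.1]
  have hPball : ∀ x : E, ENNReal.ofReal η ≤ P x (Metric.ball x r') := by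
    intro x
    refine le_trans (le_of_eq ?_) (hrP' x).le
    rw [← ENNReal.ofReal_one, ← ENNReal.ofReal_sub _ (by linarith [hγ.2])]
    congr 1
    rw [hη]
    ring
  have hglb : ∀ (n : ℕ) (x : E), R + n * r' < dist xstar x →
      ENNReal.ofReal η ^ n ≤ outFun P C n x := by
    intro n
    induction n with
    | zero => intro x _; simp [outFun]
    | succ n ih =>
        intro x hx
        have hxR : R < dist xstar x := by
          have : (0:ℝ) ≤ (n+1 : ℕ) * r' := by positivity
          push_cast at hx ⊢
          nlinarith
        have hxC : x ∉ C := fun h => by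
          have := hCsub h
          rw [Metric.mem_closedBall, dist_comm] at this
          linarith
        rw [outFun, Set.indicator_of_mem (Set.mem_compl hxC)]
        calc ENNReal.ofReal η ^ (n+1) = ENNReal.ofReal η ^ n * ENNReal.ofReal η := pow_succ _ _
          _ ≤ ENNReal.ofReal η ^ n * P x (Metric.ball x r') := mul_le_mul_of_nonneg_left (hPball x) (by positivity)
          _ = ∫⁻ _ in Metric.ball x r', ENNReal.ofReal η ^ n ∂P x :=
              (setLIntegral_const _ _).symm
          _ ≤ ∫⁻ y in Metric.ball x r', outFun P C n y ∂P x := by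
              refine setLIntegral_mono (outFun_measurable P hC n) fun y hy => ?_
              refine ih y ?_
              rw [Metric.mem_ball] at hy
              have h1 := dist_triangle xstar y x
              have h2 := dist_comm y x
              push_cast at hx ⊢
              nlinarith
          _ ≤ ∫⁻ y, outFun P C n y ∂P x := setLIntegral_le_lintegral _ _
  -- ## Step 6: geometric tail bound
  have hSmeas : ∀ t : ℝ, MeasurableSet {x : E | t < dist xstar x} := by
    intro t
    exact measurableSet_lt measurable_const (continuous_const.dist continuous_id).measurable
  set ρ : ℝ := γ / η with hρ
  have hρ0 : 0 < ρ := div_pos hγ.1 hη0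
  have hρ1 : ρ < 1 := (div_lt_one hη0).2 hηγ
  have htail : ∀ n : ℕ, Pr {x : E | R + n * r' < dist xstar x} ≤ ENNReal.ofReal ρ ^ n * M := by
    intro n
    have h1 : ENNReal.ofReal η ^ n * Pr {x : E | R + n * r' < dist xstar x} ≤
        ENNReal.ofReal γ ^ n * M := by
      calc ENNReal.ofReal η ^ n * Pr {x : E | R + n * r' < dist xstar x}
          = ∫⁻ _ in {x : E | R + n * r' < dist xstar x}, ENNReal.ofReal η ^ n ∂Pr :=
            (setLIntegral_const _ _).symm
        _ ≤ ∫⁻ x in {x : E | R + n * r' < dist xstar x}, outFun P C n x ∂Pr :=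
            setLIntegral_mono (outFun_measurable P hC n) fun x hx => hglb n x hx
        _ ≤ ∫⁻ x, outFun P C n x ∂Pr := setLIntegral_le_lintegral _ _
        _ ≤ ∫⁻ x, ENNReal.ofReal γ ^ n * V x ∂Pr := lintegral_mono (hgV n)
        _ = ENNReal.ofReal γ ^ n * M := lintegral_const_mul _ hVmeas
    have hη0' : (ENNReal.ofReal η) ^ n ≠ 0 := pow_ne_zero _ (ENNReal.ofReal_pos.mpr hη0).ne'
    have hηtop : (ENNReal.ofReal η) ^ n ≠ ∞ := ENNReal.pow_ne_top ENNReal.ofReal_ne_top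
    calc Pr {x : E | R + n * r' < dist xstar x}
        = ((ENNReal.ofReal η) ^ n)⁻¹ *
          ((ENNReal.ofReal η) ^ n * Pr {x : E | R + n * r' < dist xstar x}) := by
          rw [← mul_assoc, ENNReal.inv_mul_cancel hη0' hηtop, one_mul]
      _ ≤ ((ENNReal.ofReal η) ^ n)⁻¹ * (ENNReal.ofReal γ ^ n * M) := mul_le_mul_of_nonneg_left h1 (by positivity)
      _ = ((ENNReal.ofReal η)⁻¹ * ENNReal.ofReal γ) ^ n * M := by
          rw [← mul_assoc, ENNReal.inv_pow, ← mul_pow]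
      _ = ENNReal.ofReal ρ ^ n * M := by
          congr 2
          rw [hρ, ENNReal.ofReal_div_of_pos hη0, div_eq_mul_inv, mul_comm]
  -- ## Step 7: choose δ and conclude
  set δ : ℝ := (- Real.log ρ) / (2 * r') with hδdef
  have hδpos : 0 < δ := div_pos (neg_pos.mpr (Real.log_neg hρ0 hρ1)) (by linarith)
  set q : ℝ := Real.exp (δ * r') * ρ with hqdef
  have hq0 : 0 ≤ q := by positivity
  have hq1 : q < 1 := by
    have h1 : q = Real.exp (δ * r' + Real.log ρ) := by
      rw [Real.exp_add, Real.exp_log hρ0]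
    have h2 : δ * r' = - Real.log ρ / 2 := by
      rw [hδdef]
      field_simp
    rw [h1, h2]
    refine Real.exp_lt_one_iff.mpr ?_
    have := Real.log_neg hρ0 hρ1
    linarith
  refine ⟨δ, hδpos, ?_⟩
  have hpt : ∀ x : E, ENNReal.ofReal (Real.exp (δ * dist xstar x)) ≤
      ENNReal.ofReal (Real.exp (δ * (R + r'))) +
      ∑' n : ℕ, ENNReal.ofReal (Real.exp (δ * (R + ((n:ℝ) + 2) * r'))) *
        ({x : E | R + (n:ℝ) * r' < dist xstar x}).indicator 1 x := by
    intro x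
    by_cases hx : dist xstar x ≤ R + r'
    · exact le_add_right (ENNReal.ofReal_le_ofReal
        (Real.exp_le_exp.mpr (mul_le_mul_of_nonneg_left hx hδpos.le)))
    · push_neg at hx
      set t : ℝ := (dist xstar x - R) / r' with htdef
      have ht1 : 1 < t := (one_lt_div hr').mpr (by linarith)
      have hceil2 : 2 ≤ ⌈t⌉₊ := by
        have h1 : 1 < ⌈t⌉₊ := Nat.lt_ceil.mpr (by exact_mod_cast ht1)
        omega
      set n : ℕ := ⌈t⌉₊ - 2 with hndef
      have hn2 : ((n:ℝ) + 2) = (⌈t⌉₊ : ℝ) := by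
        have h : n + 2 = ⌈t⌉₊ := by omega
        exact_mod_cast h
      have hupper : dist xstar x ≤ R + ((n:ℝ) + 2) * r' := by
        have h3 : t ≤ ((n:ℝ) + 2) := by rw [hn2]; exact Nat.le_ceil t
        have h4 := (div_le_iff₀ hr').mp h3
        linarith
      have hlower : R + (n:ℝ) * r' < dist xstar x := by
        have h4 : (⌈t⌉₊ : ℝ) < t + 1 := Nat.ceil_lt_add_one (by linarith)
        rw [← hn2] at h4
        have h5 : (n:ℝ) < t := by linarith
        have h6 : (n:ℝ) * r' < t * r' := by nlinarith
        have h7 : t * r' = dist xstar x - R := div_mul_cancel₀ _ hr'.ne'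
        linarith
      have hterm : ENNReal.ofReal (Real.exp (δ * dist xstar x)) ≤
          ENNReal.ofReal (Real.exp (δ * (R + ((n:ℝ) + 2) * r'))) *
            ({x : E | R + (n:ℝ) * r' < dist xstar x}).indicator 1 x := by
        rw [Set.indicator_of_mem
          (show x ∈ {x : E | R + (n:ℝ) * r' < dist xstar x} from hlower), Pi.one_apply, mul_one]
        exact ENNReal.ofReal_le_ofReal (Real.exp_le_exp.mpr
          (mul_le_mul_of_nonneg_left hupper hδpos.le))
      exact le_add_left (le_trans hterm (ENNReal.le_tsum n))
  have hSmeas' : ∀ n : ℕ, Measurable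
      (fun x : E => ENNReal.ofReal (Real.exp (δ * (R + ((n:ℝ) + 2) * r'))) *
        ({x : E | R + (n:ℝ) * r' < dist xstar x}).indicator 1 x) :=
    fun n => measurable_const.mul (measurable_one.indicator (hSmeas _))
  calc ∫⁻ x, ENNReal.ofReal (Real.exp (δ * dist xstar x)) ∂Pr
      ≤ ∫⁻ x, (ENNReal.ofReal (Real.exp (δ * (R + r'))) +
        ∑' n : ℕ, ENNReal.ofReal (Real.exp (δ * (R + ((n:ℝ) + 2) * r'))) *
          ({x : E | R + (n:ℝ) * r' < dist xstar x}).indicator 1 x) ∂Pr := lintegral_mono hpt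
    _ = ENNReal.ofReal (Real.exp (δ * (R + r'))) +
        ∑' n : ℕ, ENNReal.ofReal (Real.exp (δ * (R + ((n:ℝ) + 2) * r'))) *
          Pr {x : E | R + (n:ℝ) * r' < dist xstar x} := by
        rw [lintegral_add_left measurable_const, lintegral_const, measure_univ, mul_one,
          lintegral_tsum (fun n => (hSmeas' n).aemeasurable)]
        congr 1
        refine tsum_congr fun n => ?_
        rw [lintegral_const_mul _ (measurable_one.indicator (hSmeas _)),
          lintegral_indicator (hSmeas _)]
        simp
    _ ≤ ENNReal.ofReal (Real.exp (δ * (R + r'))) +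
        ∑' n : ℕ, (ENNReal.ofReal (Real.exp (δ * (R + 2 * r'))) * M) * ENNReal.ofReal q ^ n := by
        refine add_le_add_right (ENNReal.tsum_le_tsum fun n => ?_) _
        have hexp : Real.exp (δ * (R + ((n:ℝ) + 2) * r')) =
            Real.exp (δ * (R + 2 * r')) * Real.exp (δ * r') ^ n := by
          rw [← Real.exp_nat_mul, ← Real.exp_add]
          congr 1
          ring
        calc ENNReal.ofReal (Real.exp (δ * (R + ((n:ℝ) + 2) * r'))) *
              Pr {x : E | R + (n:ℝ) * r' < dist xstar x}
            ≤ (ENNReal.ofReal (Real.exp (δ * (R + 2 * r'))) *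
              ENNReal.ofReal (Real.exp (δ * r')) ^ n) * (ENNReal.ofReal ρ ^ n * M) := by
              rw [hexp, ENNReal.ofReal_mul (by positivity), ENNReal.ofReal_pow (by positivity)]
              exact mul_le_mul_of_nonneg_left (htail n) (by positivity)
          _ = (ENNReal.ofReal (Real.exp (δ * (R + 2 * r'))) * M) *
              (ENNReal.ofReal (Real.exp (δ * r')) * ENNReal.ofReal ρ) ^ n := by ring
          _ = (ENNReal.ofReal (Real.exp (δ * (R + 2 * r'))) * M) * ENNReal.ofReal q ^ n := by
              rw [← ENNReal.ofReal_mul (by positivity)]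
    _ < ∞ := by
        rw [ENNReal.tsum_mul_left, ENNReal.tsum_geometric]
        refine ENNReal.add_lt_top.mpr ⟨ENNReal.ofReal_lt_top, ?_⟩
        refine ENNReal.mul_lt_top (ENNReal.mul_lt_top ENNReal.ofReal_lt_top hMfin) ?_
        exact ENNReal.inv_lt_top.mpr (tsub_pos_of_lt (ENNReal.ofReal_lt_one.mpr hq1))
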